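/- Let n ∈ ℕ, I ∈ IS(n) and π a permutation of [n]. For 1 ≤ k ≤ n−1 set i_k := (π_{|k+1})⁻¹(k+1), where π_{|k} is the permutation of [k] obtained by deleting the entries k+1,…,n from the one-line notation of π. Define I_n := I and I_{k−1} := φ^k_{k−1}(I_k, i_{k−1}) for 2 ≤ k ≤ n, using the one-step erasing map. Then for every 1 ≤ k ≤ n: (b) I_k = φ^n_k(I, j^π_k), where j^π_k ∈ [k:n] is the increasing enumeration of the set π⁻¹([k]); and (c) I_k = (π_{|k})⁻¹( π(I)_{|k} ), where π(I) := {π(e) : e ∈ I} and H_{|k} := {e ∩ [k] : e ∈ H}. -/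

import Mathlib

open TopologicalSpace Filter Set MeasureTheory ProbabilityTheory
open scoped ENNReal symmDiff

noncomputable section

/-- The triangle `▲ = {(x,y) ∈ ℝ² : 0 ≤ x ≤ y ≤ 1}`. -/
def Tri : Set (ℝ × ℝ) := {p | 0 ≤ p.1 ∧ p.1 ≤ p.2 ∧ p.2 ≤ 1}

/-- The diagonal `Δ = {(x,x) : x ∈ [0,1]}`. -/
def Diag : Set (ℝ × ℝ) := {p | ∃ x : ℝ, 0 ≤ x ∧ x ≤ 1 ∧ p = (x, x)}

/-- Membership in `IS(∞)`: compact subsets of the triangle containing the diagonal. -/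
def MemISinf (K : Set (ℝ × ℝ)) : Prop := IsCompact K ∧ K ⊆ Tri ∧ Diag ⊆ K

/-- `IsIS n I`: `I` is an interval system on `[n] = {1,…,n}`: it contains `∅` and all
singletons `{j}`, `j ∈ [n]`, and every nonempty element is an interval `[a,b] ⊆ [n]`. -/
def IsIS (n : ℕ) (I : Set (Finset ℕ)) : Prop :=
  (∅ : Finset ℕ) ∈ I ∧ (∀ j : ℕ, 1 ≤ j → j ≤ n → ({j} : Finset ℕ) ∈ I) ∧
    ∀ e ∈ I, e ≠ (∅ : Finset ℕ) → ∃ a b : ℕ, 1 ≤ a ∧ a ≤ b ∧ b ≤ n ∧ e = Finset.Icc a b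

/-- Extension of a vector `(u₁,…,u_k)` by the conventions `u₀ := -1`, `u_{k+1} := 2`. -/
def uext (k : ℕ) (u : ℕ → ℝ) : ℕ → ℝ := fun i => if i = 0 then -1 else if i ≤ k then u i else 2

/-- The sampling map `φ^∞_k`: it contains `∅`, all singletons, and exactly those intervals
`[a,b]`, `1 ≤ a < b ≤ k`, for which `K ∩ (u_{a-1},u_a) × (u_b,u_{b+1}) ≠ ∅`. -/
def phiInf (k : ℕ) (K : Set (ℝ × ℝ)) (u : ℕ → ℝ) : Set (Finset ℕ) :=
  {e | e = (∅ : Finset ℕ)} ∪ {e | ∃ j : ℕ, 1 ≤ j ∧ j ≤ k ∧ e = {j}} ∪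
    {e | ∃ a b : ℕ, 1 ≤ a ∧ a < b ∧ b ≤ k ∧ e = Finset.Icc a b ∧
      ∃ p ∈ K, uext k u (a - 1) < p.1 ∧ p.1 < uext k u a ∧
        uext k u b < p.2 ∧ p.2 < uext k u (b + 1)}

/-- Extension of `(j₁,…,j_k) ∈ [k:n]` by the conventions `j₀ := -n`, `j_{k+1} := 2n`. -/
def jext (n k : ℕ) (j : ℕ → ℕ) : ℕ → ℤ :=
  fun i => if i = 0 then -(n : ℤ) else if i ≤ k then (j i : ℤ) else 2 * n

/-- The finite sampling map `φ^n_k`: `[a,b] ∈ φ^n_k(I,j)` iff some `[A,B] ∈ I` satisfies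
`j_{a-1} < A ≤ j_a ≤ j_b ≤ B < j_{b+1}`; together with `∅`. -/
def phiFin (n k : ℕ) (I : Set (Finset ℕ)) (j : ℕ → ℕ) : Set (Finset ℕ) :=
  {e | e = (∅ : Finset ℕ)} ∪
    {e | ∃ a b : ℕ, 1 ≤ a ∧ a ≤ b ∧ b ≤ k ∧ e = Finset.Icc a b ∧
      ∃ A B : ℕ, A ≤ B ∧ Finset.Icc A B ∈ I ∧
        jext n k j (a - 1) < (A : ℤ) ∧ (A : ℤ) ≤ jext n k j a ∧
        jext n k j a ≤ jext n k j b ∧ jext n k j b ≤ (B : ℤ) ∧ (B : ℤ) < jext n k j (b + 1)}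

/-- Removing the element `k` from the interval `[a,b]`: it becomes `[a-1,b-1]` if `k < a`,
`[a,b-1]` if `a ≤ k ≤ b`, and stays `[a,b]` if `b < k`. -/
def eraseElem (k a b : ℕ) : Finset ℕ :=
  if b < k then Finset.Icc a b else if k < a then Finset.Icc (a - 1) (b - 1) else Finset.Icc a (b - 1)

/-- The one-step erasing map `φ^{n+1}_n(⬝, k)`, removing `k` from every interval. -/
def phiStep (I : Set (Finset ℕ)) (k : ℕ) : Set (Finset ℕ) :=
  {e | e = (∅ : Finset ℕ)} ∪
    {e | ∃ a b : ℕ, a ≤ b ∧ Finset.Icc a b ∈ I ∧ e = eraseElem k a b}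

/-- The scaled interval system `n⁻¹I = {((a-1)/n, b/n) : ∅ ≠ [a,b] ∈ I} ∪ Δ ⊆ ▲`. -/
def scaleIS (n : ℕ) (I : Set (Finset ℕ)) : Set (ℝ × ℝ) :=
  {p | ∃ a b : ℕ, 1 ≤ a ∧ a ≤ b ∧ Finset.Icc a b ∈ I ∧
        p = (((a : ℝ) - 1) / n, (b : ℝ) / n)} ∪ Diag

/-- `orderStat k u i` : the `i`-th smallest among `u 1, …, u k`  (for `1 ≤ i ≤ k`). -/
def orderStat (k : ℕ) (u : ℕ → ℝ) (i : ℕ) : ℝ :=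
  (Multiset.sort (Multiset.map u (Finset.Icc 1 k).val) (· ≤ ·)).getD (i - 1) 0

/-- The ℓ¹-distance `d((x₁,y₁),(x₂,y₂)) = |x₁-x₂| + |y₁-y₂|` on `ℝ²`. -/
def dist1 (p q : ℝ × ℝ) : ℝ := |p.1 - q.1| + |p.2 - q.2|

/-- The Hausdorff distance associated with the ℓ¹-distance on `ℝ²`. -/
def hd1 (K L : Set (ℝ × ℝ)) : ℝ :=
  max (sSup ((fun p => sInf (dist1 p '' L)) '' K))
      (sSup ((fun p => sInf (dist1 p '' K)) '' L))

/-- `enumOf s r` : the `r`-th smallest element of the finite set `s` (`1`-based). -/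
def enumOf (s : Finset ℕ) (r : ℕ) : ℕ := (s.sort (· ≤ ·)).getD (r - 1) 0

/-- We regard the (discrete) space of hypergraphs/interval systems with its full σ-field. -/
instance instMSSetFinset : MeasurableSpace (Set (Finset ℕ)) := ⊤

/-- The Borel σ-field of the Hausdorff-metric topology on the nonempty compact subsets of `ℝ²`. -/
instance instMSNC : MeasurableSpace (NonemptyCompacts (ℝ × ℝ)) := borel _

instance instBSNC : BorelSpace (NonemptyCompacts (ℝ × ℝ)) := ⟨rfl⟩

/-- `U` is an iid sequence of uniform([0,1]) random variables (a `U`-process). -/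
def IsUniformIID {Ω : Type*} [MeasurableSpace Ω] (μ : Measure Ω) (U : ℕ → Ω → ℝ) : Prop :=
  (∀ i, Measurable (U i)) ∧ iIndepFun U μ ∧
    ∀ i, Measure.map (U i) μ = volume.restrict (Set.Icc (0 : ℝ) 1)

/-- `rankOf u n = #{i ∈ [n+1] : u i ≤ u (n+1)}`, the rank of `u (n+1)` among `u 1, …, u (n+1)`;
as a function of an iid uniform sequence `U`, this is the eraser process corresponding to `U`. -/
def rankOf (u : ℕ → ℝ) (n : ℕ) : ℕ :=
  ((Finset.Icc 1 (n + 1)).filter (fun i => u i ≤ u (n + 1))).card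

/-- The backward filtration `F_n = σ(I_m, η_m : m ≥ n)` generated by the process `(I, η)`. -/
def eipF {Ω : Type*} [MeasurableSpace Ω] (I : ℕ → Ω → Set (Finset ℕ)) (η : ℕ → Ω → ℕ)
    (n : ℕ) : MeasurableSpace Ω :=
  ⨆ m, ⨆ _ : n ≤ m, (MeasurableSpace.comap (I m) ⊤ ⊔ MeasurableSpace.comap (η m) ⊤)

/-- The tail (terminal) σ-field `F_∞ = ∩_n F_n` of the process `(I, η)`. -/
def eipTail {Ω : Type*} [MeasurableSpace Ω] (I : ℕ → Ω → Set (Finset ℕ))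
    (η : ℕ → Ω → ℕ) : MeasurableSpace Ω :=
  ⨅ n, eipF I η n

/-- `(I, η)` is an erased-interval process (EIP) with respect to `μ`:
`(I_n, η_n)` takes values in `IS(n) × [n+1]` a.s., `η_n` is uniform on `[n+1]` and independent
of `F_{n+1} = σ(I_m, η_m : m ≥ n+1)`, and `I_n = φ^{n+1}_n(I_{n+1}, η_n)` a.s. -/
structure IsEIP {Ω : Type*} [MeasurableSpace Ω] (μ : Measure Ω)
    (I : ℕ → Ω → Set (Finset ℕ)) (η : ℕ → Ω → ℕ) : Prop where
  measI : ∀ n, Measurable (I n)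
  measη : ∀ n, Measurable (η n)
  valI : ∀ n, 1 ≤ n → ∀ᵐ ω ∂μ, IsIS n (I n ω)
  valη : ∀ n, 1 ≤ n → ∀ᵐ ω ∂μ, η n ω ∈ Finset.Icc 1 (n + 1)
  unif : ∀ n, 1 ≤ n → ∀ k ∈ Finset.Icc 1 (n + 1), μ {ω | η n ω = k} = ((n : ℝ≥0∞) + 1)⁻¹
  indep : ∀ n, 1 ≤ n → Indep (MeasurableSpace.comap (η n) ⊤) (eipF I η (n + 1)) μ
  step : ∀ n, 1 ≤ n → ∀ᵐ ω ∂μ, I n ω = phiStep (I (n + 1) ω) (η n ω)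

/-- `U` is the `U`-process corresponding to the eraser process `η`. -/
def CorrespondsU {Ω : Type*} [MeasurableSpace Ω] (μ : Measure Ω)
    (η : ℕ → Ω → ℕ) (U : ℕ → Ω → ℝ) : Prop :=
  IsUniformIID μ U ∧ ∀ n, 1 ≤ n → ∀ᵐ ω ∂μ, η n ω = rankOf (fun i => U i ω) n

/-- Every `m₁`-measurable event agrees with some `m₂`-measurable event up to a `μ`-null set. -/
def NullSubset {Ω : Type*} [MeasurableSpace Ω] (μ : Measure Ω)
    (m₁ m₂ : MeasurableSpace Ω) : Prop :=
  ∀ A : Set Ω, MeasurableSet[m₁] A → ∃ B : Set Ω, MeasurableSet[m₂] B ∧ μ (symmDiff A B) = 0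

/-- Relabeling the edges of a hypergraph along a map of the vertices: `π(H) = {π(e) : e ∈ H}`. -/
def relabel (f : ℕ → ℕ) (H : Set (Finset ℕ)) : Set (Finset ℕ) :=
  {e | ∃ e' ∈ H, e = e'.image f}

/-- The restriction `H_{|k} = {e ∩ [k] : e ∈ H}` of a hypergraph. -/
def restrictH (k : ℕ) (H : Set (Finset ℕ)) : Set (Finset ℕ) :=
  {e | ∃ e' ∈ H, e = e' ∩ Finset.Icc 1 k}

/-- The permutations `S_n = b_n(η₁,…,η_{n-1})` built from a sequence of erasers:
`S_{n+1}` is obtained from `S_n` by inserting `n+1` in the `η_n`-th gap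
of the one-line notation of `S_n` (the permutation process corresponding to `η`). -/
def permOf (η : ℕ → ℕ) : ℕ → ℕ → ℕ
  | 0 => fun r => r
  | 1 => fun r => r
  | (n + 2) => fun r =>
      if r = η (n + 1) then n + 2
      else if r < η (n + 1) then permOf η (n + 1) r
      else permOf η (n + 1) (r - 1)

/-- `IsIH n H` : `H` is an interval hypergraph on `[n]`: it contains `∅` and all singletons,
every edge is a subset of `[n]`, and some relabeling of `H` (equivalently, some linear order
on `[n]`) turns `H` into an interval system. -/
def IsIH (n : ℕ) (H : Set (Finset ℕ)) : Prop :=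
  (∅ : Finset ℕ) ∈ H ∧ (∀ j : ℕ, 1 ≤ j → j ≤ n → ({j} : Finset ℕ) ∈ H) ∧
    (∀ e ∈ H, e ⊆ Finset.Icc 1 n) ∧
    ∃ f : ℕ → ℕ, Set.BijOn f (Set.Icc 1 n) (Set.Icc 1 n) ∧ IsIS n (relabel f H)

/-- The hypergraph `{{i ∈ [n] : x < u_i < y} : (x,y) ∈ K} ∪ {{j} : j ∈ [n]} ∪ {∅}`
on `[n]` sampled from a set `K ⊆ ▲` at positions `u`. -/
def sampledH (n : ℕ) (K : Set (ℝ × ℝ)) (u : ℕ → ℝ) : Set (Finset ℕ) :=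
  {e | e = (∅ : Finset ℕ)} ∪ {e | ∃ j : ℕ, 1 ≤ j ∧ j ≤ n ∧ e = {j}} ∪
    {e | ∃ p ∈ K, e = (Finset.Icc 1 n).filter (fun i => p.1 < u i ∧ u i < p.2)}

/-- `(H_n)` is an exchangeable interval hypergraph on `ℕ` with respect to `μ`. -/
structure IsEIH {Ω : Type*} [MeasurableSpace Ω] (μ : Measure Ω)
    (H : ℕ → Ω → Set (Finset ℕ)) : Prop where
  meas : ∀ n, Measurable (H n)
  val : ∀ n, 1 ≤ n → ∀ᵐ ω ∂μ, IsIH n (H n ω)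
  restr : ∀ n, 1 ≤ n → ∀ᵐ ω ∂μ, H n ω = restrictH n (H (n + 1) ω)
  exch : ∀ n, 1 ≤ n → ∀ f : ℕ → ℕ, Set.BijOn f (Set.Icc 1 n) (Set.Icc 1 n) →
    Measure.map (fun ω => relabel f (H n ω)) μ = Measure.map (H n) μ

/-- `i_k = (π_{|k+1})⁻¹(k+1)`: the rank of `π⁻¹(k+1)` inside `π⁻¹([k+1])`. -/
def ikOf (π : Equiv.Perm ℕ) (n k : ℕ) : ℕ :=
  ((Finset.Icc 1 n).filter (fun i => π i ≤ k + 1 ∧ i ≤ π.symm (k + 1))).card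

/-- `j^π_k` : the increasing enumeration of the set `π⁻¹([k]) ⊆ [n]`. -/
def jpi (π : Equiv.Perm ℕ) (n k : ℕ) : ℕ → ℕ :=
  fun r => enumOf ((Finset.Icc 1 n).filter (fun i => π i ≤ k)) r

/-- The inverse `(π_{|k})⁻¹` of the permutation of `[k]` obtained by deleting the entries
`k+1,…,n` from the one-line notation of `π`: `(π_{|k})⁻¹(v)` is the rank of `π⁻¹(v)`
inside `π⁻¹([k])`. -/
def restrPermInv (π : Equiv.Perm ℕ) (n k : ℕ) : ℕ → ℕ :=
  fun v => ((Finset.Icc 1 n).filter (fun i => π i ≤ k ∧ i ≤ π.symm v)).card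


lemma card_filter_eq_length (s : Finset ℕ) (p : ℕ → Prop) [DecidablePred p] :
    (s.filter p).card = ((s.sort (·≤·)).filter (fun x => decide (p x))).length := by
  have h2 : s.val = ((s.sort (·≤·) : List ℕ) : Multiset ℕ) := (Finset.sort_eq s _).symm
  have : (s.filter p).card = Multiset.card (Multiset.filter p s.val) := rfl
  rw [this, h2, Multiset.filter_coe, Multiset.coe_card]

lemma filter_le_sorted (l : List ℕ) (hl : l.Pairwise (· < ·)) :
    ∀ i (hi : i < l.length), (l.filter (fun x => decide (x ≤ l.get ⟨i, hi⟩))).length = i + 1 := by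
  induction l with
  | nil => intro i hi; simp at hi
  | cons a t ih =>
    intro i hi
    have hat : ∀ x ∈ t, a < x := fun x hx => (List.pairwise_cons.mp hl).1 x hx
    cases i with
    | zero =>
      simp only [List.get]
      rw [List.filter_cons]
      have hend : t.filter (fun x => decide (x ≤ a)) = [] := by
        apply List.filter_eq_nil_iff.mpr
        intro x hx
        simp only [decide_eq_true_eq]
        exact not_le.mpr (hat x hx)
      simp [hend]
    | succ i =>
      have hti : i < t.length := by simpa using hi
      have hget : (a :: t).get ⟨i + 1, hi⟩ = t.get ⟨i, hti⟩ := rfl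
      rw [hget, List.filter_cons]
      have ha : decide (a ≤ t.get ⟨i, hti⟩) = true :=
        decide_eq_true (le_of_lt (hat _ (t.get_mem _)))
      rw [if_pos ha, List.length_cons, ih (List.pairwise_cons.mp hl).2 i hti]

lemma filter_lt_sorted (l : List ℕ) (hl : l.Pairwise (· < ·)) :
    ∀ i (hi : i < l.length), (l.filter (fun x => decide (x < l.get ⟨i, hi⟩))).length = i := by
  induction l with
  | nil => intro i hi; simp at hi
  | cons a t ih =>
    intro i hi
    have hat : ∀ x ∈ t, a < x := fun x hx => (List.pairwise_cons.mp hl).1 x hx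
    cases i with
    | zero =>
      simp only [List.get]
      rw [List.filter_cons]
      have hend : t.filter (fun x => decide (x < a)) = [] := by
        apply List.filter_eq_nil_iff.mpr
        intro x hx
        simp only [decide_eq_true_eq]
        exact not_lt.mpr (le_of_lt (hat x hx))
      simp [hend]
    | succ i =>
      have hti : i < t.length := by simpa using hi
      have hget : (a :: t).get ⟨i + 1, hi⟩ = t.get ⟨i, hti⟩ := rfl
      rw [hget, List.filter_cons]
      have ha : decide (a < t.get ⟨i, hti⟩) = true :=
        decide_eq_true (hat _ (t.get_mem _))
      rw [if_pos ha, List.length_cons, ih (List.pairwise_cons.mp hl).2 i hti]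

/-- rank function -/
def Fc (s : Finset ℕ) (m : ℕ) : ℕ := (s.filter (fun x => x ≤ m)).card

lemma Fc_mono (s : Finset ℕ) {m m' : ℕ} (h : m ≤ m') : Fc s m ≤ Fc s m' := by
  apply Finset.card_le_card
  intro z hz
  simp only [Finset.mem_filter] at hz ⊢
  exact ⟨hz.1, le_trans hz.2 h⟩

lemma Fc_le_card (s : Finset ℕ) (m : ℕ) : Fc s m ≤ s.card :=
  Finset.card_le_card (Finset.filter_subset _ _)

lemma Fc_lt (s : Finset ℕ) {y x : ℕ} (hyx : y < x) (hx : x ∈ s) : Fc s y < Fc s x := by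
  apply Finset.card_lt_card
  constructor
  · intro z hz
    simp only [Finset.mem_filter] at hz ⊢
    exact ⟨hz.1, le_trans hz.2 hyx.le⟩
  · intro hsub
    have hxmem : x ∈ s.filter (fun z => z ≤ x) := Finset.mem_filter.mpr ⟨hx, le_refl x⟩
    have := Finset.mem_filter.mp (hsub hxmem)
    omega

lemma enum_mem (s : Finset ℕ) {r : ℕ} (h1 : 1 ≤ r) (h2 : r ≤ s.card) : enumOf s r ∈ s := by
  have hlen : r - 1 < (s.sort (·≤·)).length := by
    rw [Finset.length_sort]; omega
  unfold enumOf
  rw [List.getD_eq_getElem _ _ hlen]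
  rw [← Finset.mem_sort (α := ℕ) (· ≤ ·)]
  exact List.getElem_mem _

lemma rank_enum (s : Finset ℕ) {r : ℕ} (h1 : 1 ≤ r) (h2 : r ≤ s.card) :
    Fc s (enumOf s r) = r := by
  have hlen : r - 1 < (s.sort (·≤·)).length := by
    rw [Finset.length_sort]; omega
  unfold Fc enumOf
  rw [List.getD_eq_getElem _ _ hlen]
  have : (s.sort (·≤·))[r-1] = (s.sort (·≤·)).get ⟨r-1, hlen⟩ := rfl
  rw [this, card_filter_eq_length,
    filter_le_sorted _ ((Finset.sortedLT_sort s).pairwise) _ hlen]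
  omega

lemma enum_le_iff (s : Finset ℕ) {r : ℕ} (h1 : 1 ≤ r) (h2 : r ≤ s.card) (m : ℕ) :
    enumOf s r ≤ m ↔ r ≤ Fc s m := by
  constructor
  · intro h
    calc r = Fc s (enumOf s r) := (rank_enum s h1 h2).symm
    _ ≤ Fc s m := Fc_mono s h
  · intro h
    by_contra hc
    push_neg at hc
    have hlen : r - 1 < (s.sort (·≤·)).length := by
      rw [Finset.length_sort]; omega
    have hcard : (s.filter (fun x => x < enumOf s r)).card = r - 1 := by
      unfold enumOf
      rw [List.getD_eq_getElem _ _ hlen]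
      have : (s.sort (·≤·))[r-1] = (s.sort (·≤·)).get ⟨r-1, hlen⟩ := rfl
      rw [this, card_filter_eq_length, filter_lt_sorted _ ((Finset.sortedLT_sort s).pairwise) _ hlen]
    have hsub : Fc s m ≤ (s.filter (fun x => x < enumOf s r)).card := by
      apply Finset.card_le_card
      intro z hz
      simp only [Finset.mem_filter] at hz ⊢
      exact ⟨hz.1, lt_of_le_of_lt hz.2 hc⟩
    unfold Fc at h hsub
    omega

lemma enum_surj (s : Finset ℕ) {x : ℕ} (hx : x ∈ s) : enumOf s (Fc s x) = x ∧
    1 ≤ Fc s x ∧ Fc s x ≤ s.card := by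
  have h1 : 1 ≤ Fc s x := by
    have hm : x ∈ s.filter (fun z => z ≤ x) := Finset.mem_filter.mpr ⟨hx, le_refl x⟩
    exact Finset.card_pos.mpr ⟨x, hm⟩
  have h2 : Fc s x ≤ s.card := Fc_le_card s x
  refine ⟨?_, h1, h2⟩
  have hxl : x ∈ s.sort (·≤·) := (Finset.mem_sort _).mpr hx
  obtain ⟨i, hget⟩ := List.mem_iff_get.mp hxl
  have hget' : (s.sort (·≤·)).get ⟨i.1, i.2⟩ = x := by rw [Fin.eta]; exact hget
  have hrank : Fc s x = i.1 + 1 := by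
    unfold Fc
    rw [card_filter_eq_length, ← hget', filter_le_sorted _ ((Finset.sortedLT_sort s).pairwise) _ i.2]
  rw [hrank]
  unfold enumOf
  have hlen : i.1 + 1 - 1 < (s.sort (·≤·)).length := by simpa using i.2
  rw [List.getD_eq_getElem _ _ hlen, ← hget']
  rfl

lemma enum_mono (s : Finset ℕ) {r r' : ℕ} (h1 : 1 ≤ r) (h2 : r ≤ r') (h3 : r' ≤ s.card) :
    enumOf s r ≤ enumOf s r' := by
  rw [enum_le_iff s h1 (le_trans h2 h3)]
  rw [rank_enum s (le_trans h1 h2) h3]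
  exact h2

-- ==== permutation facts ====

lemma perm_mem {π : Equiv.Perm ℕ} {n : ℕ} (hπ : ∀ i, i ∉ Set.Icc 1 n → π i = i)
    {i : ℕ} (hi : i ∈ Finset.Icc 1 n) : π i ∈ Finset.Icc 1 n := by
  by_contra h
  have h1 : (π i : ℕ) ∉ Set.Icc 1 n := by
    simpa [Finset.mem_Icc, Set.mem_Icc] using h
  have h2 : π (π i) = π i := hπ _ h1
  have h3 : π i = i := π.injective h2
  rw [h3] at h; exact h hi

lemma perm_symm_mem {π : Equiv.Perm ℕ} {n : ℕ} (hπ : ∀ i, i ∉ Set.Icc 1 n → π i = i)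
    {i : ℕ} (hi : i ∈ Finset.Icc 1 n) : π.symm i ∈ Finset.Icc 1 n := by
  by_contra h
  have h1 : (π.symm i : ℕ) ∉ Set.Icc 1 n := by
    simpa [Finset.mem_Icc, Set.mem_Icc] using h
  have h2 : π (π.symm i) = π.symm i := hπ _ h1
  rw [Equiv.apply_symm_apply] at h2
  rw [← h2] at h; exact h hi

/-- `π⁻¹([k]) ∩ [n]` -/
def Sset (π : Equiv.Perm ℕ) (n k : ℕ) : Finset ℕ :=
  (Finset.Icc 1 n).filter (fun i => π i ≤ k)

lemma card_Sset {π : Equiv.Perm ℕ} {n : ℕ} (hπ : ∀ i, i ∉ Set.Icc 1 n → π i = i)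
    {k : ℕ} (hk : k ≤ n) : (Sset π n k).card = k := by
  have : (Sset π n k).card = (Finset.Icc 1 k).card := by
    apply Finset.card_bij' (fun i _ => π i) (fun v _ => π.symm v)
    · intro i hi
      have hi' := Finset.mem_filter.mp hi
      have := perm_mem hπ hi'.1
      simp only [Finset.mem_Icc] at this ⊢
      exact ⟨this.1, hi'.2⟩
    · intro v hv
      simp only [Finset.mem_Icc] at hv
      have hv' : v ∈ Finset.Icc 1 n := Finset.mem_Icc.mpr ⟨hv.1, le_trans hv.2 hk⟩
      apply Finset.mem_filter.mpr
      refine ⟨perm_symm_mem hπ hv', ?_⟩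
      rw [Equiv.apply_symm_apply]; exact hv.2
    · intro i _; exact π.symm_apply_apply i
    · intro v _; exact π.apply_symm_apply v
  rw [this, Nat.card_Icc]; omega

lemma Sset_erase {π : Equiv.Perm ℕ} {n k : ℕ} (hk1 : 1 ≤ k + 1) (hk : k + 1 ≤ n) :
    Sset π n k = (Sset π n (k+1)).erase (π.symm (k+1)) := by
  ext i
  simp only [Sset, Finset.mem_erase, Finset.mem_filter]
  constructor
  · rintro ⟨h1, h2⟩
    refine ⟨?_, h1, by omega⟩
    intro hc
    rw [hc, Equiv.apply_symm_apply] at h2; omega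
  · rintro ⟨h0, h1, h2⟩
    refine ⟨h1, ?_⟩
    have : π i ≠ k + 1 := by
      intro hc
      apply h0
      rw [← hc, Equiv.symm_apply_apply]
    omega

lemma symm_mem_Sset {π : Equiv.Perm ℕ} {n : ℕ} (hπ : ∀ i, i ∉ Set.Icc 1 n → π i = i)
    {k : ℕ} (hk1 : 1 ≤ k) (hk : k ≤ n) : π.symm k ∈ Sset π n k := by
  apply Finset.mem_filter.mpr
  refine ⟨perm_symm_mem hπ (Finset.mem_Icc.mpr ⟨hk1, hk⟩), ?_⟩
  rw [Equiv.apply_symm_apply]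

lemma Fc_erase_le {s : Finset ℕ} {p x : ℕ} (hp : p ∈ s) (hpx : p ≤ x) :
    Fc (s.erase p) x + 1 = Fc s x := by
  unfold Fc
  rw [Finset.filter_erase]
  have hmem : p ∈ s.filter (fun z => z ≤ x) := Finset.mem_filter.mpr ⟨hp, hpx⟩
  rw [Finset.card_erase_of_mem hmem]
  have : 1 ≤ (s.filter (fun z => z ≤ x)).card :=
    Finset.card_pos.mpr ⟨p, Finset.mem_filter.mpr ⟨hp, hpx⟩⟩
  omega

lemma Fc_erase_gt {s : Finset ℕ} {p x : ℕ} (hpx : x < p) :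
    Fc (s.erase p) x = Fc s x := by
  unfold Fc
  rw [Finset.filter_erase, Finset.erase_eq_of_notMem]
  intro hc
  have := (Finset.mem_filter.mp hc).2
  omega

lemma Icc_inj {a b a' b' : ℕ} (h1 : a ≤ b) (h2 : a' ≤ b')
    (h : Finset.Icc a b = Finset.Icc a' b') : a = a' ∧ b = b' := by
  have ha : a ∈ Finset.Icc a' b' := h ▸ Finset.mem_Icc.mpr ⟨le_refl a, h1⟩
  have ha' : a' ∈ Finset.Icc a b := h.symm ▸ Finset.mem_Icc.mpr ⟨le_refl a', h2⟩
  have hb : b ∈ Finset.Icc a' b' := h ▸ Finset.mem_Icc.mpr ⟨h1, le_refl b⟩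
  have hb' : b' ∈ Finset.Icc a b := h.symm ▸ Finset.mem_Icc.mpr ⟨h2, le_refl b'⟩
  simp only [Finset.mem_Icc] at ha ha' hb hb'
  omega

lemma norm_mem {n : ℕ} {I : Set (Finset ℕ)} (hI : IsIS n I) {A B : ℕ} (hAB : A ≤ B)
    (hm : Finset.Icc A B ∈ I) : 1 ≤ A ∧ B ≤ n := by
  have hne : Finset.Icc A B ≠ ∅ :=
    Finset.nonempty_iff_ne_empty.mp (Finset.nonempty_Icc.mpr hAB)
  obtain ⟨a, b, ha1, hab, hbn, heq⟩ := hI.2.2 _ hm hne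
  obtain ⟨h1, h2⟩ := Icc_inj hAB hab heq
  omega

/-- The canonical form of all the interval systems in the chain. -/
def Dset (π : Equiv.Perm ℕ) (n k : ℕ) (I : Set (Finset ℕ)) : Set (Finset ℕ) :=
  {e | e = (∅ : Finset ℕ)} ∪ {e | ∃ A B : ℕ, 1 ≤ A ∧ A ≤ B ∧ B ≤ n ∧ Finset.Icc A B ∈ I ∧
    Fc (Sset π n k) (A-1) < Fc (Sset π n k) B ∧
    e = Finset.Icc (Fc (Sset π n k) (A-1) + 1) (Fc (Sset π n k) B)}

lemma Fc_Icc (n m : ℕ) (h : m ≤ n) : Fc (Finset.Icc 1 n) m = m := by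
  unfold Fc
  have : (Finset.Icc 1 n).filter (fun x => x ≤ m) = Finset.Icc 1 m := by
    ext x; simp only [Finset.mem_Icc, Finset.mem_filter]; omega
  rw [this, Nat.card_Icc]; omega

lemma Sset_top {π : Equiv.Perm ℕ} {n : ℕ} (hπ : ∀ i, i ∉ Set.Icc 1 n → π i = i) :
    Sset π n n = Finset.Icc 1 n := by
  apply Finset.filter_true_of_mem
  intro i hi
  exact (Finset.mem_Icc.mp (perm_mem hπ hi)).2

lemma Dset_base {π : Equiv.Perm ℕ} {n : ℕ} (hn : 1 ≤ n)
    (hπ : ∀ i, i ∉ Set.Icc 1 n → π i = i) {I : Set (Finset ℕ)} (hI : IsIS n I) :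
    Dset π n n I = I := by
  ext e
  constructor
  · rintro (he | ⟨A, B, hA1, hAB, hBn, hm, _, he⟩)
    · rw [he]; exact hI.1
    · rw [Sset_top hπ] at he
      rw [Fc_Icc n _ (by omega), Fc_Icc n _ hBn] at he
      have : A - 1 + 1 = A := by omega
      rw [this] at he
      rw [he]; exact hm
  · intro he
    by_cases h0 : e = ∅
    · left; exact h0
    · obtain ⟨a, b, ha1, hab, hbn, heq⟩ := hI.2.2 _ he h0
      right
      refine ⟨a, b, ha1, hab, hbn, heq ▸ he, ?_, ?_⟩
      · rw [Sset_top hπ, Fc_Icc n _ (by omega), Fc_Icc n _ hbn]; omega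
      · rw [Sset_top hπ, Fc_Icc n _ (by omega), Fc_Icc n _ hbn]
        rw [heq]
        congr 1
        omega


lemma ikOf_eq (π : Equiv.Perm ℕ) (n k : ℕ) :
    ikOf π n k = Fc (Sset π n (k+1)) (π.symm (k+1)) := by
  unfold ikOf Fc Sset
  rw [Finset.filter_filter]

lemma Dset_step {π : Equiv.Perm ℕ} {n : ℕ} (hπ : ∀ i, i ∉ Set.Icc 1 n → π i = i)
    {I : Set (Finset ℕ)} {k : ℕ} (hk1 : 1 ≤ k) (hk : k + 1 ≤ n) :
    phiStep (Dset π n (k+1) I) (ikOf π n k) = Dset π n k I := by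
  have hp : π.symm (k+1) ∈ Sset π n (k+1) := symm_mem_Sset hπ (by omega) hk
  have card1 : (Sset π n (k+1)).card = k + 1 := card_Sset hπ hk
  obtain ⟨henum, hm1, hm2⟩ := enum_surj (Sset π n (k+1)) hp
  have hmF : ikOf π n k = Fc (Sset π n (k+1)) (π.symm (k+1)) := ikOf_eq π n k
  have hple : ∀ x, π.symm (k+1) ≤ x ↔ ikOf π n k ≤ Fc (Sset π n (k+1)) x := by
    intro x
    rw [hmF]
    conv_lhs => rw [← henum]
    exact enum_le_iff _ hm1 hm2 x
  have hErase : Sset π n k = (Sset π n (k+1)).erase (π.symm (k+1)) :=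
    Sset_erase (by omega) hk
  have hFle : ∀ x, π.symm (k+1) ≤ x → Fc (Sset π n k) x + 1 = Fc (Sset π n (k+1)) x := by
    intro x hx; rw [hErase]; exact Fc_erase_le hp hx
  have hFgt : ∀ x, x < π.symm (k+1) → Fc (Sset π n k) x = Fc (Sset π n (k+1)) x := by
    intro x hx; rw [hErase]; exact Fc_erase_gt hx
  ext e
  simp only [phiStep, Dset, Set.mem_union, Set.mem_setOf_eq]
  constructor
  · rintro (h0 | ⟨a, b, hab, (hemp | ⟨A, B, hA1, hAB, hBn, hmI, hlt, heq⟩), herase⟩)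
    · left; exact h0
    · exfalso
      have := Finset.Icc_eq_empty_iff.mp hemp
      omega
    · obtain ⟨ha, hb⟩ := Icc_inj hab (by omega) heq
      subst ha; subst hb
      by_cases hc1 : Fc (Sset π n (k+1)) B < ikOf π n k
      · -- B < p : interval untouched
        have hBp : B < π.symm (k+1) := by
          by_contra hc; push_neg at hc
          have := (hple B).mp hc; omega
        have hA1p : A - 1 < π.symm (k+1) := by omega
        have e1 := hFgt _ hA1p
        have e2 := hFgt _ hBp
        right
        refine ⟨A, B, hA1, hAB, hBn, hmI, by omega, ?_⟩
        rw [herase]; unfold eraseElem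
        rw [if_pos hc1]
        congr 1 <;> omega
      · by_cases hc2 : ikOf π n k < Fc (Sset π n (k+1)) (A-1) + 1
        · -- p ≤ A - 1 : interval shifts down
          have hpA : π.symm (k+1) ≤ A - 1 := (hple (A-1)).mpr (by omega)
          have hpB : π.symm (k+1) ≤ B := le_trans hpA (by omega)
          have e1 := hFle _ hpA
          have e2 := hFle _ hpB
          right
          refine ⟨A, B, hA1, hAB, hBn, hmI, by omega, ?_⟩
          rw [herase]; unfold eraseElem
          rw [if_neg hc1, if_pos hc2]
          congr 1 <;> omega
        · -- A - 1 < p ≤ B : right endpoint shrinks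
          have hApm : A - 1 < π.symm (k+1) := by
            by_contra hc; push_neg at hc
            have := (hple (A-1)).mp hc; omega
          have hpB : π.symm (k+1) ≤ B := (hple B).mpr (by omega)
          have e1 := hFgt _ hApm
          have e2 := hFle _ hpB
          have hval : e = Finset.Icc (Fc (Sset π n (k+1)) (A-1) + 1)
              (Fc (Sset π n (k+1)) B - 1) := by
            rw [herase]; unfold eraseElem
            rw [if_neg hc1, if_neg hc2]
          by_cases hend : Fc (Sset π n (k+1)) (A-1) + 1 < Fc (Sset π n (k+1)) B
          · right
            refine ⟨A, B, hA1, hAB, hBn, hmI, by omega, ?_⟩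
            rw [hval]; congr 1 <;> omega
          · left
            rw [hval]
            apply Finset.Icc_eq_empty
            omega
  · rintro (h0 | ⟨A, B, hA1, hAB, hBn, hmI, hlt, heq⟩)
    · left; exact h0
    · right
      by_cases hpB : π.symm (k+1) ≤ B
      · by_cases hpA : π.symm (k+1) ≤ A - 1
        · -- p ≤ A-1
          have e1 := hFle _ hpA
          have e2 := hFle _ hpB
          have hma : ikOf π n k ≤ Fc (Sset π n (k+1)) (A-1) := (hple (A-1)).mp hpA
          refine ⟨Fc (Sset π n (k+1)) (A-1) + 1, Fc (Sset π n (k+1)) B, by omega,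
            Or.inr ⟨A, B, hA1, hAB, hBn, hmI, by omega, rfl⟩, ?_⟩
          rw [heq]; unfold eraseElem
          rw [if_neg (by omega), if_pos (by omega)]
          congr 1 <;> omega
        · -- A-1 < p ≤ B
          push_neg at hpA
          have hma : ¬ ikOf π n k ≤ Fc (Sset π n (k+1)) (A-1) := by
            intro hc; exact absurd ((hple (A-1)).mpr hc) (by omega)
          have hmb : ikOf π n k ≤ Fc (Sset π n (k+1)) B := (hple B).mp hpB
          have e1 := hFgt _ hpA
          have e2 := hFle _ hpB
          refine ⟨Fc (Sset π n (k+1)) (A-1) + 1, Fc (Sset π n (k+1)) B, by omega,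
            Or.inr ⟨A, B, hA1, hAB, hBn, hmI, by omega, rfl⟩, ?_⟩
          rw [heq]; unfold eraseElem
          rw [if_neg (by omega), if_neg (by omega)]
          congr 1 <;> omega
      · -- B < p
        push_neg at hpB
        have hmb : ¬ ikOf π n k ≤ Fc (Sset π n (k+1)) B := by
          intro hc; exact absurd ((hple B).mpr hc) (by omega)
        have e1 := hFgt _ (by omega : A - 1 < π.symm (k+1))
        have e2 := hFgt _ hpB
        refine ⟨Fc (Sset π n (k+1)) (A-1) + 1, Fc (Sset π n (k+1)) B, by omega,
          Or.inr ⟨A, B, hA1, hAB, hBn, hmI, by omega, rfl⟩, ?_⟩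
        rw [heq]; unfold eraseElem
        rw [if_pos (by omega)]
        congr 1 <;> omega


lemma jext_zero (n k : ℕ) (j : ℕ → ℕ) : jext n k j 0 = -(n:ℤ) := by simp [jext]

lemma jext_mid (n k : ℕ) (j : ℕ → ℕ) {i : ℕ} (h1 : 1 ≤ i) (h2 : i ≤ k) :
    jext n k j i = (j i : ℤ) := by
  unfold jext
  rw [if_neg (by omega), if_pos h2]

lemma jext_top (n k : ℕ) (j : ℕ → ℕ) {i : ℕ} (h2 : k < i) :
    jext n k j i = 2 * (n:ℤ) := by
  unfold jext
  rw [if_neg (by omega), if_neg (by omega)]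

lemma jpi_enum (π : Equiv.Perm ℕ) (n k : ℕ) : jpi π n k = fun r => enumOf (Sset π n k) r := rfl

lemma phiFin_eq {π : Equiv.Perm ℕ} {n : ℕ} (hπ : ∀ i, i ∉ Set.Icc 1 n → π i = i)
    {I : Set (Finset ℕ)} (hI : IsIS n I) {k : ℕ} (hk1 : 1 ≤ k) (hk : k ≤ n) :
    phiFin n k I (jpi π n k) = Dset π n k I := by
  have cardk : (Sset π n k).card = k := card_Sset hπ hk
  ext e
  simp only [phiFin, Dset, Set.mem_union, Set.mem_setOf_eq, jpi_enum]
  constructor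
  · rintro (h0 | ⟨a, b, ha1, hab, hbk, he, A, B, hABle, hmem, h1, h2, h3, h4, h5⟩)
    · left; exact h0
    · obtain ⟨hA1, hBn⟩ := norm_mem hI hABle hmem
      rw [jext_mid n k _ ha1 (le_trans hab hbk)] at h2
      rw [jext_mid n k _ (le_trans ha1 hab) hbk] at h4
      have hA2 : A ≤ enumOf (Sset π n k) a := by omega
      have hB4 : enumOf (Sset π n k) b ≤ B := by omega
      -- Fc (A-1) = a - 1
      have hFAlt : Fc (Sset π n k) (A-1) < a := by
        by_contra hc; push_neg at hc
        have := (enum_le_iff (Sset π n k) ha1 (by omega) (A-1)).mpr hc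
        omega
      have hFAge : a - 1 ≤ Fc (Sset π n k) (A-1) := by
        rcases Nat.eq_or_lt_of_le ha1 with hone | htwo
        · omega
        · have hj : jext n k (fun r => enumOf (Sset π n k) r) (a-1)
              = (enumOf (Sset π n k) (a-1) : ℤ) :=
            jext_mid n k _ (by omega) (by omega)
          rw [hj] at h1
          have : enumOf (Sset π n k) (a-1) ≤ A - 1 := by omega
          have := (enum_le_iff (Sset π n k) (r := a - 1) (by omega) (by omega) (A-1)).mp this
          omega
      -- Fc B = b
      have hFBge : b ≤ Fc (Sset π n k) B :=
        (enum_le_iff (Sset π n k) (le_trans ha1 hab) (by omega) B).mp hB4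
      have hFBle : Fc (Sset π n k) B ≤ b := by
        rcases Nat.eq_or_lt_of_le hbk with heqk | hltk
        · have h := Fc_le_card (Sset π n k) B
          omega
        · have hj : jext n k (fun r => enumOf (Sset π n k) r) (b+1)
              = (enumOf (Sset π n k) (b+1) : ℤ) :=
            jext_mid n k _ (by omega) (by omega)
          rw [hj] at h5
          by_contra hc; push_neg at hc
          have := (enum_le_iff (Sset π n k) (r := b + 1) (by omega) (by omega) B).mpr hc
          omega
      right
      refine ⟨A, B, hA1, hABle, hBn, hmem, by omega, ?_⟩
      rw [he]; congr 1 <;> omega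
  · rintro (h0 | ⟨A, B, hA1, hAB, hBn, hmI, hlt, heq⟩)
    · left; exact h0
    · have hbk : Fc (Sset π n k) B ≤ k := by
        have h := Fc_le_card (Sset π n k) B
        omega
      have hb1 : 1 ≤ Fc (Sset π n k) B := by omega
      right
      refine ⟨Fc (Sset π n k) (A-1) + 1, Fc (Sset π n k) B, by omega, by omega, hbk, heq,
        A, B, hAB, hmI, ?_, ?_, ?_, ?_, ?_⟩
      · -- jext (a - 1) < A
        rcases Nat.eq_zero_or_pos (Fc (Sset π n k) (A-1)) with hz | hpos
        · simp only [Nat.add_sub_cancel, hz, jext_zero]; omega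
        · have hj : jext n k (fun r => enumOf (Sset π n k) r) (Fc (Sset π n k) (A-1) + 1 - 1)
              = (enumOf (Sset π n k) (Fc (Sset π n k) (A-1)) : ℤ) := by
            simp only [Nat.add_sub_cancel]
            exact jext_mid n k _ hpos (by omega)
          rw [hj]
          have := (enum_le_iff (Sset π n k) hpos (by omega) (A-1)).mpr (le_refl _)
          omega
      · -- A ≤ jext a
        rw [jext_mid n k _ (by omega) (by omega)]
        have hnot : ¬ enumOf (Sset π n k) (Fc (Sset π n k) (A-1) + 1) ≤ A - 1 := by
          intro hc
          have := (enum_le_iff (Sset π n k) (by omega) (by omega) (A-1)).mp hc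
          omega
        omega
      · -- jext a ≤ jext b
        rw [jext_mid n k _ (by omega) (by omega), jext_mid n k _ hb1 hbk]
        have := enum_mono (Sset π n k) (r := Fc (Sset π n k) (A-1) + 1)
          (r' := Fc (Sset π n k) B) (by omega) (by omega) (by omega)
        omega
      · -- jext b ≤ B
        rw [jext_mid n k _ hb1 hbk]
        have := (enum_le_iff (Sset π n k) hb1 (by omega) B).mpr (le_refl _)
        omega
      · -- B < jext (b+1)
        rcases Nat.lt_or_ge (Fc (Sset π n k) B) k with hltk | hgek
        · rw [jext_mid n k _ (by omega) (by omega)]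
          have hnot : ¬ enumOf (Sset π n k) (Fc (Sset π n k) B + 1) ≤ B := by
            intro hc
            have := (enum_le_iff (Sset π n k) (by omega) (by omega) B).mp hc
            omega
          omega
        · rw [jext_top n k _ (by omega)]
          omega


lemma restrPermInv_apply (π : Equiv.Perm ℕ) (n k i : ℕ) :
    restrPermInv π n k (π i) = Fc (Sset π n k) i := by
  unfold restrPermInv Fc Sset
  rw [Finset.filter_filter, Equiv.symm_apply_apply]

lemma image_claim {π : Equiv.Perm ℕ} {n : ℕ} (hπ : ∀ i, i ∉ Set.Icc 1 n → π i = i)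
    {k : ℕ} (hk : k ≤ n) {A B : ℕ} (hA1 : 1 ≤ A) (hBn : B ≤ n) :
    (((Finset.Icc A B).image ⇑π) ∩ Finset.Icc 1 k).image (restrPermInv π n k)
      = Finset.Icc (Fc (Sset π n k) (A-1) + 1) (Fc (Sset π n k) B) := by
  have cardk : (Sset π n k).card = k := card_Sset hπ hk
  ext r
  simp only [Finset.mem_image, Finset.mem_inter, Finset.mem_Icc]
  constructor
  · rintro ⟨v, ⟨⟨i, hiAB, rfl⟩, hv1, hvk⟩, rfl⟩
    rw [restrPermInv_apply]
    have hiS : i ∈ Sset π n k :=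
      Finset.mem_filter.mpr ⟨Finset.mem_Icc.mpr ⟨by omega, by omega⟩, hvk⟩
    constructor
    · have := Fc_lt (Sset π n k) (y := A-1) (x := i) (by omega) hiS; omega
    · exact Fc_mono _ (by omega)
  · rintro ⟨hr1, hr2⟩
    have hr1' : 1 ≤ r := by omega
    have hrk : r ≤ k := by
      have h := Fc_le_card (Sset π n k) B; omega
    have hmem : enumOf (Sset π n k) r ∈ Sset π n k := enum_mem _ hr1' (by omega)
    have hrank : Fc (Sset π n k) (enumOf (Sset π n k) r) = r := rank_enum _ hr1' (by omega)
    obtain ⟨hin, hπle⟩ := Finset.mem_filter.mp hmem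
    refine ⟨π (enumOf (Sset π n k) r), ⟨⟨enumOf (Sset π n k) r, ?_, rfl⟩, ?_, hπle⟩, ?_⟩
    · have hub : enumOf (Sset π n k) r ≤ B := (enum_le_iff _ hr1' (by omega) B).mpr hr2
      have hlb : ¬ enumOf (Sset π n k) r ≤ A - 1 := by
        intro hc
        have := (enum_le_iff _ hr1' (by omega) (A-1)).mp hc
        omega
      exact ⟨by omega, hub⟩
    · exact (Finset.mem_Icc.mp (perm_mem hπ hin)).1
    · rw [restrPermInv_apply]; exact hrank

lemma relabel_eq {π : Equiv.Perm ℕ} {n : ℕ} (hπ : ∀ i, i ∉ Set.Icc 1 n → π i = i)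
    {I : Set (Finset ℕ)} (hI : IsIS n I) {k : ℕ} (hk1 : 1 ≤ k) (hk : k ≤ n) :
    relabel (restrPermInv π n k) (restrictH k (relabel (⇑π) I)) = Dset π n k I := by
  ext e
  simp only [relabel, restrictH, Dset, Set.mem_union, Set.mem_setOf_eq]
  constructor
  · rintro ⟨e2, ⟨e1, ⟨e0, he0, rfl⟩, rfl⟩, rfl⟩
    by_cases h0 : e0 = ∅
    · left; rw [h0]; simp
    · obtain ⟨A, B, hA1, hAB, hBn, heq⟩ := hI.2.2 _ he0 h0
      rw [heq, image_claim hπ hk hA1 hBn]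
      by_cases hne : Fc (Sset π n k) (A-1) < Fc (Sset π n k) B
      · right; exact ⟨A, B, hA1, hAB, hBn, heq ▸ he0, hne, rfl⟩
      · left; apply Finset.Icc_eq_empty; omega
  · rintro (h0 | ⟨A, B, hA1, hAB, hBn, hmI, hlt, heq⟩)
    · exact ⟨∅, ⟨∅, ⟨∅, hI.1, by simp⟩, by simp⟩, by simp [h0]⟩
    · refine ⟨((Finset.Icc A B).image ⇑π ∩ Finset.Icc 1 k),
        ⟨(Finset.Icc A B).image ⇑π, ⟨Finset.Icc A B, hmI, rfl⟩, rfl⟩, ?_⟩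
      rw [heq, image_claim hπ hk hA1 hBn]


/-- Let `I ∈ IS(n)`, let `π` be a permutation of `[n]` and define the chain
`I_n := I`, `I_{k-1} := φ^k_{k-1}(I_k, i_{k-1})` with `i_k = (π_{|k+1})⁻¹(k+1)`. Then for all
`1 ≤ k ≤ n`: (b) `I_k = φ^n_k(I, j^π_k)` where `j^π_k` enumerates `π⁻¹([k])` increasingly, and
(c) `I_k = (π_{|k})⁻¹(π(I)_{|k})`. -/
theorem stmt2 (n : ℕ) (hn : 1 ≤ n) (I : Set (Finset ℕ)) (hI : IsIS n I)
    (π : Equiv.Perm ℕ) (hπ : ∀ i, i ∉ Set.Icc 1 n → π i = i)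
    (C : ℕ → Set (Finset ℕ)) (hCn : C n = I)
    (hCstep : ∀ k, 2 ≤ k → k ≤ n → C (k - 1) = phiStep (C k) (ikOf π n (k - 1))) :
    ∀ k, 1 ≤ k → k ≤ n →
      C k = phiFin n k I (jpi π n k) ∧
      C k = relabel (restrPermInv π n k) (restrictH k (relabel (⇑π) I)) := by
  have key : ∀ d : ℕ, 1 ≤ n - d → C (n - d) = Dset π n (n - d) I := by
    intro d
    induction d with
    | zero => intro _; rw [Nat.sub_zero, hCn, Dset_base hn hπ hI]
    | succ d ih =>
      intro hd
      have h2 : 1 ≤ n - d := by omega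
      have hC := hCstep (n - d) (by omega) (by omega)
      have h3 : n - d - 1 = n - (d+1) := by omega
      rw [h3] at hC
      rw [hC, ih h2]
      have hstep := Dset_step (I := I) (k := n - (d+1)) hπ hd (by omega)
      have h1 : n - (d+1) + 1 = n - d := by omega
      rw [h1] at hstep
      exact hstep
  intro k hk1 hk
  have hkd : k = n - (n - k) := by omega
  have hCk : C k = Dset π n k I := by rw [hkd]; exact key (n - k) (by omega)
  exact ⟨hCk.trans (phiFin_eq hπ hI hk1 hk).symm, hCk.trans (relabel_eq hπ hI hk1 hk).symm⟩
end
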